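/- The Kepler-Heisenberg system admits a family of stationary orbits on the z-axis whose vertical momentum grows linearly: for every z₀ > 0 and every a ∈ ℝ, the curve c : ℝ → ℝ⁶ given by c(t) = (0, 0, z₀, 0, 0, a − t/(32π·z₀²)) is a solution of the Kepler-Heisenberg system; its position is constant while p_z decreases linearly in time. -/

import Mathlib

/-- `P_X = p_x - (1/2) y p_z`, where phase space coordinates are
`(x, y, z, p_x, p_y, p_z) = (p 0, p 1, p 2, p 3, p 4, p 5)`. -/
noncomputable def PX (p : Fin 6 → ℝ) : ℝ := p 3 - (1/2) * p 1 * p 5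

/-- `P_Y = p_y + (1/2) x p_z`. -/
noncomputable def PY (p : Fin 6 → ℝ) : ℝ := p 4 + (1/2) * p 0 * p 5

/-- `Q = (x² + y²)² + 16 z²`. -/
noncomputable def Qf (p : Fin 6 → ℝ) : ℝ := ((p 0)^2 + (p 1)^2)^2 + 16 * (p 2)^2

/-- The Kepler–Heisenberg Hamiltonian `H = (1/2)(P_X² + P_Y²) - (1/(8π)) Q^{-1/2}`. -/
noncomputable def Ham (p : Fin 6 → ℝ) : ℝ :=
  (1/2) * ((PX p)^2 + (PY p)^2) - (1/(8*Real.pi)) * (Qf p) ^ (-(1/2) : ℝ)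

/-- A solution of the Kepler–Heisenberg system: a differentiable curve on an open
interval (open preconnected set) `I`, whose position component never vanishes, and
which satisfies Hamilton's equations for `Ham`. -/
def IsSolutionOn (c : ℝ → Fin 6 → ℝ) (I : Set ℝ) : Prop :=
  IsOpen I ∧ IsPreconnected I ∧
  ∀ t ∈ I,
    (¬ (c t 0 = 0 ∧ c t 1 = 0 ∧ c t 2 = 0)) ∧
    HasDerivAt (fun τ => c τ 0) (fderiv ℝ Ham (c t) (Pi.single 3 1)) t ∧
    HasDerivAt (fun τ => c τ 1) (fderiv ℝ Ham (c t) (Pi.single 4 1)) t ∧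
    HasDerivAt (fun τ => c τ 2) (fderiv ℝ Ham (c t) (Pi.single 5 1)) t ∧
    HasDerivAt (fun τ => c τ 3) (-(fderiv ℝ Ham (c t) (Pi.single 0 1))) t ∧
    HasDerivAt (fun τ => c τ 4) (-(fderiv ℝ Ham (c t) (Pi.single 1 1))) t ∧
    HasDerivAt (fun τ => c τ 5) (-(fderiv ℝ Ham (c t) (Pi.single 2 1))) t

lemma rpow_aux (z0 : ℝ) (h : 0 < z0) :
    (16*(z0*z0) : ℝ) ^ ((-(1/2):ℝ)-1) = (64 * z0^3)⁻¹ := by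
  have h4 : (0:ℝ) < 4*z0 := by linarith
  have h16 : (16*(z0*z0):ℝ) = (4*z0)^(2:ℕ) := by ring
  rw [h16, ← Real.rpow_natCast (4*z0) 2, ← Real.rpow_mul h4.le,
    show ((2:ℕ):ℝ) * (-(1/2)-1) = ((-3:ℤ):ℝ) by norm_num, Real.rpow_intCast]
  rw [zpow_neg, show ((3:ℤ) = (3:ℕ)) from rfl, zpow_natCast]
  congr 1; ring

lemma ham_fderiv (z0 : ℝ) (hz0 : 0 < z0) (b : ℝ) (i : Fin 6) :
    fderiv ℝ Ham (![0, 0, z0, 0, 0, b]) (Pi.single i 1)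
      = if i = 2 then 1 / (32 * Real.pi * z0^2) else 0 := by
  set p : Fin 6 → ℝ := ![0, 0, z0, 0, 0, b] with hp
  have h0 := hasFDerivAt_apply (𝕜 := ℝ) 0 p
  have h1 := hasFDerivAt_apply (𝕜 := ℝ) 1 p
  have h2 := hasFDerivAt_apply (𝕜 := ℝ) 2 p
  have h3 := hasFDerivAt_apply (𝕜 := ℝ) 3 p
  have h4 := hasFDerivAt_apply (𝕜 := ℝ) 4 p
  have h5 := hasFDerivAt_apply (𝕜 := ℝ) 5 p
  have hPX := h3.sub ((h1.const_mul (1/2 : ℝ)).mul h5)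
  have hPY := h4.add ((h0.const_mul (1/2 : ℝ)).mul h5)
  have hQ := ((h0.mul h0).add (h1.mul h1)).mul ((h0.mul h0).add (h1.mul h1)) |>.add
    ((h2.mul h2).const_mul (16:ℝ))
  have hQne : ((fun q : Fin 6 → ℝ => (q 0 * q 0 + q 1 * q 1) * (q 0 * q 0 + q 1 * q 1)
      + 16 * (q 2 * q 2)) p) ≠ 0 := by
    simp [hp]
    positivity
  have hR := hQ.rpow_const (p := (-(1/2) : ℝ)) (Or.inl hQne)
  have hH := (((hPX.mul hPX).add (hPY.mul hPY)).const_mul (1/2 : ℝ)).sub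
    (hR.const_mul (1/(8*Real.pi)))
  have heq : Ham = (fun q : Fin 6 → ℝ =>
      1 / 2 * ((q 3 - 1 / 2 * q 1 * q 5) * (q 3 - 1 / 2 * q 1 * q 5) +
        (q 4 + 1 / 2 * q 0 * q 5) * (q 4 + 1 / 2 * q 0 * q 5)) -
      1 / (8 * Real.pi) *
        ((q 0 * q 0 + q 1 * q 1) * (q 0 * q 0 + q 1 * q 1) + 16 * (q 2 * q 2)) ^
          (-(1/2) : ℝ)) := by
    funext q
    simp only [Ham, PX, PY, Qf]
    rw [show ((q 0)^2+(q 1)^2)^2 + 16*(q 2)^2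
      = (q 0 * q 0 + q 1 * q 1) * (q 0 * q 0 + q 1 * q 1) + 16*(q 2 * q 2) from by ring]
    ring
  have hHam := hH.congr_of_eventuallyEq (Filter.Eventually.of_forall fun q => congrFun heq q)
  rw [hHam.fderiv]
  simp only [ContinuousLinearMap.coe_sub', ContinuousLinearMap.coe_add',
    ContinuousLinearMap.coe_smul', Pi.sub_apply, Pi.add_apply, Pi.smul_apply,
    ContinuousLinearMap.proj_apply, smul_eq_mul, hp, Pi.mul_apply]
  simp only [Matrix.cons_val_zero, Matrix.cons_val_one, Matrix.head_cons,
    Matrix.cons_val_two, Matrix.tail_cons, Matrix.cons_val_three, Matrix.cons_val_four,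
    Matrix.head_fin_const]
  rw [show ((0:ℝ)*0 + 0*0) * (0*0+0*0) + 16*(z0*z0) = 16*(z0*z0) from by ring]
  rw [rpow_aux z0 hz0]
  have hpi := Real.pi_ne_zero
  fin_cases i <;>
    simp only [Pi.single_apply, ContinuousLinearMap.smul_apply, smul_eq_mul] <;>
    norm_num [Fin.ext_iff] <;> field_simp <;> ring

/-- The Kepler–Heisenberg system admits a family of stationary orbits on the `z`-axis
whose vertical momentum decreases linearly: for `z₀ > 0` and `a ∈ ℝ`, the curve
`t ↦ (0, 0, z₀, 0, 0, a - t/(32π z₀²))` is a solution; its position is constant while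
`p_z` is linear in time. -/
theorem kh_stationary_z_axis_orbit (z0 : ℝ) (hz0 : 0 < z0) (a : ℝ) :
    IsSolutionOn (fun t => ![0, 0, z0, 0, 0, a - t / (32 * Real.pi * z0^2)])
      Set.univ := by
  refine ⟨isOpen_univ, isPreconnected_univ, fun t _ => ?_⟩
  have hfd := ham_fderiv z0 hz0 (a - t / (32 * Real.pi * z0^2))
  refine ⟨fun h => hz0.ne' h.2.2, ?_, ?_, ?_, ?_, ?_, ?_⟩
  · show HasDerivAt (fun _ : ℝ => (0:ℝ)) _ t
    rw [hfd 3]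
    norm_num [Fin.ext_iff]
    exact hasDerivAt_const t 0
  · show HasDerivAt (fun _ : ℝ => (0:ℝ)) _ t
    rw [hfd 4]
    norm_num [Fin.ext_iff]
    exact hasDerivAt_const t 0
  · show HasDerivAt (fun _ : ℝ => z0) _ t
    rw [hfd 5]
    norm_num [Fin.ext_iff]
    exact hasDerivAt_const t z0
  · show HasDerivAt (fun _ : ℝ => (0:ℝ)) _ t
    rw [hfd 0]
    norm_num [Fin.ext_iff]
    exact hasDerivAt_const t 0
  · show HasDerivAt (fun _ : ℝ => (0:ℝ)) _ t
    rw [hfd 1]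
    norm_num [Fin.ext_iff]
    exact hasDerivAt_const t 0
  · show HasDerivAt (fun τ : ℝ => a - τ / (32 * Real.pi * z0^2)) _ t
    rw [hfd 2, if_pos rfl]
    exact ((hasDerivAt_id t).div_const (32 * Real.pi * z0^2)).const_sub a
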